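/- Fix κ ≥ 1. The map (X : Hermitian positive definite N×N matrices with X ⪰ I) ↦ λ_max(X)/λ_min(X) is quasiconvex on the convex set {X ⪰ I}; in particular, the set {X : X ⪰ I, λ_max(X) ≤ κ λ_min(X)} is convex. -/

import Mathlib

open Matrix ComplexOrder

section Aux

variable {N : ℕ}

private lemma isHermitian_real_smul (a : ℝ) {M : Matrix (Fin N) (Fin N) ℂ}
    (hM : M.IsHermitian) : (a • M).IsHermitian := by
  unfold Matrix.IsHermitian
  rw [conjTranspose_smul, hM.eq, star_trivial]

private lemma posSemidef_real_smul {a : ℝ} (ha : 0 ≤ a) {M : Matrix (Fin N) (Fin N) ℂ}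
    (hM : M.PosSemidef) : (a • M).PosSemidef := by
  refine posSemidef_iff_dotProduct_mulVec.mpr ⟨isHermitian_real_smul a hM.1, fun x => ?_⟩
  rw [RCLike.real_smul_eq_coe_smul (K := ℂ), smul_mulVec, dotProduct_smul, smul_eq_mul]
  exact mul_nonneg (Complex.zero_le_real.mpr ha) (hM.dotProduct_mulVec_nonneg x)

private lemma conj_diag_posSemidef_iff (U : Matrix.unitaryGroup (Fin N) ℂ) (f : Fin N → ℝ) :
    ((U : Matrix (Fin N) (Fin N) ℂ) * diagonal (fun i => (f i : ℂ)) *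
      star (U : Matrix (Fin N) (Fin N) ℂ)).PosSemidef ↔ ∀ i, 0 ≤ f i := by
  have hU1 : star (U : Matrix (Fin N) (Fin N) ℂ) * (U : Matrix (Fin N) (Fin N) ℂ) = 1 :=
    Matrix.mem_unitaryGroup_iff'.mp U.2
  constructor
  · intro h
    have h2 := h.conjTranspose_mul_mul_same (U : Matrix (Fin N) (Fin N) ℂ)
    have heq : ((U : Matrix (Fin N) (Fin N) ℂ))ᴴ *
        ((U : Matrix (Fin N) (Fin N) ℂ) * diagonal (fun i => (f i : ℂ)) *
          star (U : Matrix (Fin N) (Fin N) ℂ)) * (U : Matrix (Fin N) (Fin N) ℂ)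
        = diagonal (fun i => (f i : ℂ)) := by
      rw [← Matrix.star_eq_conjTranspose]
      calc star (U : Matrix (Fin N) (Fin N) ℂ) *
            ((U : Matrix (Fin N) (Fin N) ℂ) * diagonal (fun i => (f i : ℂ)) *
              star (U : Matrix (Fin N) (Fin N) ℂ)) * (U : Matrix (Fin N) (Fin N) ℂ)
          = (star (U : Matrix (Fin N) (Fin N) ℂ) * (U : Matrix (Fin N) (Fin N) ℂ)) *
              diagonal (fun i => (f i : ℂ)) *
              (star (U : Matrix (Fin N) (Fin N) ℂ) * (U : Matrix (Fin N) (Fin N) ℂ)) := by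
            simp only [mul_assoc]
        _ = diagonal (fun i => (f i : ℂ)) := by rw [hU1, one_mul, mul_one]
    rw [heq] at h2
    intro i
    exact Complex.zero_le_real.mp (posSemidef_diagonal_iff.mp h2 i)
  · intro h
    have hd : (diagonal (fun i => (f i : ℂ))).PosSemidef :=
      posSemidef_diagonal_iff.mpr fun i => Complex.zero_le_real.mpr (h i)
    simpa [Matrix.star_eq_conjTranspose] using
      hd.mul_mul_conjTranspose_same (U : Matrix (Fin N) (Fin N) ℂ)

private lemma repr_sub_smul {A : Matrix (Fin N) (Fin N) ℂ} (hA : A.IsHermitian) (s : ℝ) :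
    A - (s : ℂ) • 1 =
      (hA.eigenvectorUnitary : Matrix (Fin N) (Fin N) ℂ) *
        diagonal (fun i => ((hA.eigenvalues i - s : ℝ) : ℂ)) *
        star (hA.eigenvectorUnitary : Matrix (Fin N) (Fin N) ℂ) := by
  set U := (hA.eigenvectorUnitary : Matrix (Fin N) (Fin N) ℂ) with hUdef
  have hU : U * star U = 1 := Matrix.mem_unitaryGroup_iff.mp hA.eigenvectorUnitary.2
  have hdiag : diagonal (fun i => ((hA.eigenvalues i - s : ℝ) : ℂ))
      = diagonal (RCLike.ofReal ∘ hA.eigenvalues) - (s : ℂ) • (1 : Matrix (Fin N) (Fin N) ℂ) := by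
    ext i j
    by_cases h : i = j
    · subst h
      simp [Matrix.diagonal_apply_eq, Matrix.smul_apply, Matrix.one_apply_eq]
    · simp [Matrix.diagonal_apply_ne _ h, Matrix.smul_apply, Matrix.one_apply_ne h]
  have hs := hA.spectral_theorem
  rw [Unitary.conjStarAlgAut_apply, ← hUdef] at hs
  rw [hdiag, mul_sub, sub_mul, ← hs]
  congr 1
  rw [mul_smul_comm, smul_mul_assoc, mul_one, hU]

private lemma lower_iff {A : Matrix (Fin N) (Fin N) ℂ} (hA : A.IsHermitian) (s : ℝ) :
    (A - (s : ℂ) • 1).PosSemidef ↔ ∀ i, s ≤ hA.eigenvalues i := by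
  rw [repr_sub_smul hA s, conj_diag_posSemidef_iff]
  simp [sub_nonneg]

private lemma repr_smul_sub {A : Matrix (Fin N) (Fin N) ℂ} (hA : A.IsHermitian) (s : ℝ) :
    (s : ℂ) • 1 - A =
      (hA.eigenvectorUnitary : Matrix (Fin N) (Fin N) ℂ) *
        diagonal (fun i => ((s - hA.eigenvalues i : ℝ) : ℂ)) *
        star (hA.eigenvectorUnitary : Matrix (Fin N) (Fin N) ℂ) := by
  rw [← neg_sub A ((s : ℂ) • 1), repr_sub_smul hA s, ← neg_mul, ← mul_neg]
  have hd : -(diagonal fun i => ((hA.eigenvalues i - s : ℝ) : ℂ))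
      = diagonal fun i => ((s - hA.eigenvalues i : ℝ) : ℂ) := by
    ext i j
    by_cases h : i = j
    · subst h
      simp only [Matrix.neg_apply, Matrix.diagonal_apply_eq]
      push_cast
      ring
    · simp [Matrix.diagonal_apply_ne _ h]
  rw [hd]

private lemma upper_iff {A : Matrix (Fin N) (Fin N) ℂ} (hA : A.IsHermitian) (s : ℝ) :
    ((s : ℂ) • 1 - A).PosSemidef ↔ ∀ i, hA.eigenvalues i ≤ s := by
  rw [repr_smul_sub hA s, conj_diag_posSemidef_iff]
  simp [sub_nonneg]

private lemma combo_sub (a b r t : ℝ) (X Y : Matrix (Fin N) (Fin N) ℂ) :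
    a • (X - (r : ℂ) • 1) + b • (Y - (t : ℂ) • 1)
      = (a • X + b • Y) - ((a * r + b * t : ℝ) : ℂ) • 1 := by
  simp only [smul_sub, sub_add_sub_comm]
  congr 1
  rw [← algebraMap_smul ℂ a ((r : ℂ) • (1 : Matrix (Fin N) (Fin N) ℂ)),
    ← algebraMap_smul ℂ b ((t : ℂ) • (1 : Matrix (Fin N) (Fin N) ℂ)), smul_smul, smul_smul,
    ← add_smul]
  norm_num

private lemma combo_sub' (a b r t : ℝ) (X Y : Matrix (Fin N) (Fin N) ℂ) :
    a • ((r : ℂ) • 1 - X) + b • ((t : ℂ) • 1 - Y)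
      = ((a * r + b * t : ℝ) : ℂ) • 1 - (a • X + b • Y) := by
  simp only [smul_sub, sub_add_sub_comm]
  congr 1
  rw [← algebraMap_smul ℂ a ((r : ℂ) • (1 : Matrix (Fin N) (Fin N) ℂ)),
    ← algebraMap_smul ℂ b ((t : ℂ) • (1 : Matrix (Fin N) (Fin N) ℂ)), smul_smul, smul_smul,
    ← add_smul]
  norm_num

private lemma key_convex (N : ℕ) (hN : 0 < N) (c : ℝ) (hc : 0 ≤ c) :
    Convex ℝ {X : Matrix (Fin N) (Fin N) ℂ |
      ∃ h : X.IsHermitian, (X - 1).PosSemidef ∧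
        (⨆ i, h.eigenvalues i) ≤ c * (⨅ i, h.eigenvalues i)} := by
  haveI : Nonempty (Fin N) := Fin.pos_iff_nonempty.mp hN
  rintro X ⟨hXh, hX1, hXc⟩ Y ⟨hYh, hY1, hYc⟩ a b ha hb hab
  set Z := a • X + b • Y with hZdef
  have hZh : Z.IsHermitian := (isHermitian_real_smul a hXh).add (isHermitian_real_smul b hYh)
  set iX := ⨅ i, hXh.eigenvalues i
  set sX := ⨆ i, hXh.eigenvalues i
  set iY := ⨅ i, hYh.eigenvalues i
  set sY := ⨆ i, hYh.eigenvalues i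
  have hX1' : ∀ i, (1 : ℝ) ≤ hXh.eigenvalues i := by
    apply (lower_iff hXh 1).mp
    simpa using hX1
  have hY1' : ∀ i, (1 : ℝ) ≤ hYh.eigenvalues i := by
    apply (lower_iff hYh 1).mp
    simpa using hY1
  have hbddX : BddBelow (Set.range hXh.eigenvalues) := Set.Finite.bddBelow (Set.finite_range _)
  have hbddY : BddBelow (Set.range hYh.eigenvalues) := Set.Finite.bddBelow (Set.finite_range _)
  have hbddX' : BddAbove (Set.range hXh.eigenvalues) := Set.Finite.bddAbove (Set.finite_range _)
  have hbddY' : BddAbove (Set.range hYh.eigenvalues) := Set.Finite.bddAbove (Set.finite_range _)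
  -- lower bound for eigenvalues of Z
  have hZlow : ∀ i, a * iX + b * iY ≤ hZh.eigenvalues i := by
    apply (lower_iff hZh _).mp
    rw [← combo_sub]
    exact (posSemidef_real_smul ha ((lower_iff hXh iX).mpr fun i => ciInf_le hbddX i)).add
      (posSemidef_real_smul hb ((lower_iff hYh iY).mpr fun i => ciInf_le hbddY i))
  have hZup : ∀ i, hZh.eigenvalues i ≤ a * sX + b * sY := by
    apply (upper_iff hZh _).mp
    rw [← combo_sub']
    exact (posSemidef_real_smul ha ((upper_iff hXh sX).mpr fun i => le_ciSup hbddX' i)).add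
      (posSemidef_real_smul hb ((upper_iff hYh sY).mpr fun i => le_ciSup hbddY' i))
  have hiX1 : (1 : ℝ) ≤ iX := le_ciInf hX1'
  have hiY1 : (1 : ℝ) ≤ iY := le_ciInf hY1'
  have hone : (1 : ℝ) ≤ a * iX + b * iY := by nlinarith
  refine ⟨hZh, ?_, ?_⟩
  · -- (Z - 1).PosSemidef
    have := (lower_iff hZh 1).mpr fun i => le_trans hone (hZlow i)
    simpa using this
  · have hs : (⨆ i, hZh.eigenvalues i) ≤ a * sX + b * sY := ciSup_le hZup
    have hi : a * iX + b * iY ≤ ⨅ i, hZh.eigenvalues i := le_ciInf hZlow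
    calc (⨆ i, hZh.eigenvalues i) ≤ a * sX + b * sY := hs
      _ ≤ a * (c * iX) + b * (c * iY) := by gcongr
      _ = c * (a * iX + b * iY) := by ring
      _ ≤ c * (⨅ i, hZh.eigenvalues i) := by
          exact mul_le_mul_of_nonneg_left hi hc

end Aux

/-- Quasiconvexity of the condition number `λ_max/λ_min` on the convex set
`{X Hermitian : X ⪰ I}`; in particular the feasible set of the projection
problem (condition number at most `κ`) is convex. -/
theorem condition_number_quasiconvex (N : ℕ) (hN : 0 < N) (κ : ℝ) (hκ : 1 ≤ κ) :
    Convex ℝ {X : Matrix (Fin N) (Fin N) ℂ | X.IsHermitian ∧ (X - 1).PosSemidef} ∧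
    QuasiconvexOn ℝ
      {X : Matrix (Fin N) (Fin N) ℂ | X.IsHermitian ∧ (X - 1).PosSemidef}
      (fun X =>
        if h : X.IsHermitian then (⨆ i, h.eigenvalues i) / (⨅ i, h.eigenvalues i)
        else 0) ∧
    Convex ℝ {X : Matrix (Fin N) (Fin N) ℂ |
      ∃ h : X.IsHermitian, (X - 1).PosSemidef ∧
        (⨆ i, h.eigenvalues i) ≤ κ * (⨅ i, h.eigenvalues i)} := by
  haveI : Nonempty (Fin N) := Fin.pos_iff_nonempty.mp hN
  have hSconv : Convex ℝ {X : Matrix (Fin N) (Fin N) ℂ | X.IsHermitian ∧ (X - 1).PosSemidef} := by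
    rintro X ⟨hXh, hX1⟩ Y ⟨hYh, hY1⟩ a b ha hb hab
    refine ⟨(isHermitian_real_smul a hXh).add (isHermitian_real_smul b hYh), ?_⟩
    have h := combo_sub (N := N) a b 1 1 X Y
    rw [mul_one, mul_one, hab] at h
    simp only [Complex.ofReal_one, one_smul] at h
    rw [← h]
    exact (posSemidef_real_smul ha hX1).add (posSemidef_real_smul hb hY1)
  -- positivity of the infimum on the feasible set
  have hinf_pos : ∀ (X : Matrix (Fin N) (Fin N) ℂ) (hXh : X.IsHermitian),
      (X - 1).PosSemidef → (0 : ℝ) < ⨅ i, hXh.eigenvalues i := by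
    intro X hXh hX1
    have hX1' : ∀ i, (1 : ℝ) ≤ hXh.eigenvalues i := by
      apply (lower_iff hXh 1).mp
      simpa using hX1
    have : (1 : ℝ) ≤ ⨅ i, hXh.eigenvalues i := le_ciInf hX1'
    linarith
  have hsup_le : ∀ (X : Matrix (Fin N) (Fin N) ℂ) (hXh : X.IsHermitian),
      (⨅ i, hXh.eigenvalues i) ≤ ⨆ i, hXh.eigenvalues i := by
    intro X hXh
    have hbdd : BddBelow (Set.range hXh.eigenvalues) := Set.Finite.bddBelow (Set.finite_range _)
    have hbdd' : BddAbove (Set.range hXh.eigenvalues) := Set.Finite.bddAbove (Set.finite_range _)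
    obtain ⟨i⟩ : Nonempty (Fin N) := inferInstance
    exact le_trans (ciInf_le hbdd i) (le_ciSup hbdd' i)
  refine ⟨hSconv, ?_, key_convex N hN κ (by linarith)⟩
  intro c
  by_cases hc : 0 ≤ c
  · have hset : {x ∈ {X : Matrix (Fin N) (Fin N) ℂ | X.IsHermitian ∧ (X - 1).PosSemidef} |
        (fun X => if h : X.IsHermitian then (⨆ i, h.eigenvalues i) / (⨅ i, h.eigenvalues i)
          else 0) x ≤ c}
        = {X : Matrix (Fin N) (Fin N) ℂ |
            ∃ h : X.IsHermitian, (X - 1).PosSemidef ∧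
              (⨆ i, h.eigenvalues i) ≤ c * (⨅ i, h.eigenvalues i)} := by
      ext X
      constructor
      · rintro ⟨⟨hXh, hX1⟩, hfX⟩
        simp only [dif_pos hXh] at hfX
        exact ⟨hXh, hX1, (div_le_iff₀ (hinf_pos X hXh hX1)).mp hfX⟩
      · rintro ⟨hXh, hX1, hXc⟩
        refine ⟨⟨hXh, hX1⟩, ?_⟩
        simp only [dif_pos hXh]
        exact (div_le_iff₀ (hinf_pos X hXh hX1)).mpr hXc
    rw [hset]
    exact key_convex N hN c hc
  · have hset : {x ∈ {X : Matrix (Fin N) (Fin N) ℂ | X.IsHermitian ∧ (X - 1).PosSemidef} |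
        (fun X => if h : X.IsHermitian then (⨆ i, h.eigenvalues i) / (⨅ i, h.eigenvalues i)
          else 0) x ≤ c} = ∅ := by
      ext X
      simp only [Set.mem_setOf_eq, Set.mem_empty_iff_false, iff_false]
      rintro ⟨⟨hXh, hX1⟩, hfX⟩
      simp only [dif_pos hXh] at hfX
      have hpos : (0 : ℝ) < ⨅ i, hXh.eigenvalues i := hinf_pos X hXh hX1
      have : (0 : ℝ) ≤ (⨆ i, hXh.eigenvalues i) / (⨅ i, hXh.eigenvalues i) :=
        div_nonneg (le_trans hpos.le (hsup_le X hXh)) hpos.le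
      linarith
    rw [hset]
    exact convex_empty
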